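/- arXiv:1510.06999 — 4 statements merged into one kernel-verified Lean document; each statement's English description precedes it below -/
import Mathlib

section
/- Let y₁, …, y_M be nonnegative real numbers with σ₁ = Σ y_k > 0, and let σ_d be the d-th elementary symmetric polynomial. Then for each 1 ≤ d ≤ M, σ_d ≥ (σ₁^d / d!) · (1 - C(d,2) · (Σ_{k=1}^M y_k²) / σ₁²), where C(d,2) is the binomial coefficient (interpreted as 0 when d = 1). -/
open Finset

variable {M : ℕ}

noncomputable def E (y : Fin M → ℝ) (d : ℕ) : ℝ :=
  ∑ s ∈ Finset.powersetCard d (Finset.univ : Finset (Fin M)), ∏ k ∈ s, y k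

lemma E_nonneg (y : Fin M → ℝ) (hy : ∀ k, 0 ≤ y k) (d : ℕ) : 0 ≤ E y d :=
  Finset.sum_nonneg fun s _ => Finset.prod_nonneg fun k _ => hy k

lemma ident (y : Fin M → ℝ) (d : ℕ) :
    (∑ k, y k) * E y d =
      ((d : ℝ) + 1) * E y (d + 1) +
      ∑ s ∈ Finset.powersetCard d (Finset.univ : Finset (Fin M)),
        ∑ k ∈ s, y k * ∏ j ∈ s, y j := by
  have h1 : (∑ k, y k) * E y d
      = ∑ s ∈ Finset.powersetCard d (Finset.univ : Finset (Fin M)),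
          ∑ k, y k * ∏ j ∈ s, y j := by
    rw [E, Finset.mul_sum]
    exact Finset.sum_congr rfl fun s _ => by rw [Finset.sum_mul]
  have h2 : ∀ s : Finset (Fin M),
      (∑ k, y k * ∏ j ∈ s, y j)
        = (∑ k ∈ s, y k * ∏ j ∈ s, y j) + ∑ k ∈ sᶜ, y k * ∏ j ∈ s, y j := by
    intro s
    rw [Finset.sum_add_sum_compl]
  have h3 : ∑ s ∈ Finset.powersetCard d (Finset.univ : Finset (Fin M)),
        ∑ k ∈ sᶜ, y k * ∏ j ∈ s, y j = ((d : ℝ) + 1) * E y (d + 1) := by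
    have hrhs : ((d : ℝ) + 1) * E y (d + 1)
        = ∑ t ∈ Finset.powersetCard (d+1) (Finset.univ : Finset (Fin M)),
            ∑ k ∈ t, ∏ j ∈ t, y j := by
      rw [E, Finset.mul_sum]
      refine Finset.sum_congr rfl fun t ht => ?_
      rw [Finset.sum_const, nsmul_eq_mul, Finset.mem_powersetCard_univ.mp ht]
      push_cast; ring
    rw [hrhs, Finset.sum_sigma', Finset.sum_sigma']
    refine Finset.sum_nbij' (fun p => ⟨insert p.2 p.1, p.2⟩) (fun p => ⟨p.1.erase p.2, p.2⟩)
      ?_ ?_ ?_ ?_ ?_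
    · rintro ⟨s, k⟩ hp
      simp only [Finset.mem_sigma, Finset.mem_powersetCard_univ, Finset.mem_compl] at hp ⊢
      obtain ⟨hs, hk⟩ := hp
      exact ⟨by rw [Finset.card_insert_of_notMem hk, hs], Finset.mem_insert_self _ _⟩
    · rintro ⟨t, k⟩ hp
      simp only [Finset.mem_sigma, Finset.mem_powersetCard_univ, Finset.mem_compl] at hp ⊢
      obtain ⟨ht, hk⟩ := hp
      exact ⟨by rw [Finset.card_erase_of_mem hk, ht]; rfl, Finset.notMem_erase _ _⟩
    · rintro ⟨s, k⟩ hp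
      simp only [Finset.mem_sigma, Finset.mem_powersetCard_univ, Finset.mem_compl] at hp
      simp [Finset.erase_insert hp.2]
    · rintro ⟨t, k⟩ hp
      simp only [Finset.mem_sigma, Finset.mem_powersetCard_univ] at hp
      simp [Finset.insert_erase hp.2]
    · rintro ⟨s, k⟩ hp
      simp only [Finset.mem_sigma, Finset.mem_powersetCard_univ, Finset.mem_compl] at hp
      exact (Finset.prod_insert hp.2).symm
  rw [h1]
  simp_rw [h2]
  rw [Finset.sum_add_distrib, h3, add_comm]

lemma T_le (y : Fin M → ℝ) (hy : ∀ k, 0 ≤ y k) (d : ℕ) :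
    ∑ s ∈ Finset.powersetCard (d+1) (Finset.univ : Finset (Fin M)),
        ∑ k ∈ s, y k * ∏ j ∈ s, y j
      ≤ (∑ k, (y k) ^ 2) * E y d := by
  have key : ∑ s ∈ Finset.powersetCard (d+1) (Finset.univ : Finset (Fin M)),
        ∑ k ∈ s, y k * ∏ j ∈ s, y j
      = ∑ k : Fin M, ∑ t ∈ (Finset.powersetCard d (Finset.univ : Finset (Fin M))).filter
          (fun t => k ∉ t), (y k) ^ 2 * ∏ j ∈ t, y j := by
    rw [Finset.sum_sigma', Finset.sum_sigma']
    refine Finset.sum_nbij' (fun p => ⟨p.2, p.1.erase p.2⟩) (fun p => ⟨insert p.1 p.2, p.1⟩)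
      ?_ ?_ ?_ ?_ ?_
    · rintro ⟨s, k⟩ hp
      simp only [Finset.mem_sigma, Finset.mem_powersetCard_univ, Finset.mem_filter,
        Finset.mem_univ, true_and] at hp ⊢
      exact ⟨by rw [Finset.card_erase_of_mem hp.2, hp.1]; rfl, Finset.notMem_erase _ _⟩
    · rintro ⟨k, t⟩ hp
      simp only [Finset.mem_sigma, Finset.mem_powersetCard_univ, Finset.mem_filter,
        Finset.mem_univ, true_and] at hp ⊢
      exact ⟨by rw [Finset.card_insert_of_notMem hp.2, hp.1], Finset.mem_insert_self _ _⟩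
    · rintro ⟨s, k⟩ hp
      simp only [Finset.mem_sigma, Finset.mem_powersetCard_univ] at hp
      simp [Finset.insert_erase hp.2]
    · rintro ⟨k, t⟩ hp
      simp only [Finset.mem_sigma, Finset.mem_filter, Finset.mem_univ, true_and] at hp
      simp [Finset.erase_insert hp.2]
    · rintro ⟨s, k⟩ hp
      simp only [Finset.mem_sigma, Finset.mem_powersetCard_univ] at hp
      rw [← Finset.mul_prod_erase _ _ hp.2]
      ring
  rw [key, Finset.sum_mul]
  refine Finset.sum_le_sum fun k _ => ?_
  rw [← Finset.mul_sum]
  have : (∑ t ∈ (Finset.powersetCard d (Finset.univ : Finset (Fin M))).filter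
      (fun t => k ∉ t), ∏ j ∈ t, y j) ≤ E y d := by
    apply Finset.sum_le_sum_of_subset_of_nonneg (Finset.filter_subset _ _)
    exact fun t _ _ => Finset.prod_nonneg fun j _ => hy j
  exact mul_le_mul_of_nonneg_left this (sq_nonneg _)

lemma T_nonneg (y : Fin M → ℝ) (hy : ∀ k, 0 ≤ y k) (d : ℕ) :
    0 ≤ ∑ s ∈ Finset.powersetCard d (Finset.univ : Finset (Fin M)),
        ∑ k ∈ s, y k * ∏ j ∈ s, y j :=
  Finset.sum_nonneg fun s _ => Finset.sum_nonneg fun k _ =>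
    mul_nonneg (hy k) (Finset.prod_nonneg fun j _ => hy j)

lemma upper (y : Fin M → ℝ) (hy : ∀ k, 0 ≤ y k) (d : ℕ) :
    (d.factorial : ℝ) * E y d ≤ (∑ k, y k) ^ d := by
  induction d with
  | zero => simp [E]
  | succ d ih =>
    have hS : 0 ≤ ∑ k, y k := Finset.sum_nonneg fun k _ => hy k
    have h1 : ((d : ℝ) + 1) * E y (d + 1) ≤ (∑ k, y k) * E y d := by
      have := ident y d
      have := T_nonneg y hy d
      linarith
    have hfac : ((d + 1).factorial : ℝ) = (d + 1) * d.factorial := by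
      rw [Nat.factorial_succ]; push_cast; ring
    calc ((d + 1).factorial : ℝ) * E y (d + 1)
        = (d.factorial : ℝ) * (((d : ℝ) + 1) * E y (d + 1)) := by rw [hfac]; ring
      _ ≤ (d.factorial : ℝ) * ((∑ k, y k) * E y d) := by
          exact mul_le_mul_of_nonneg_left h1 (by positivity)
      _ = (∑ k, y k) * ((d.factorial : ℝ) * E y d) := by ring
      _ ≤ (∑ k, y k) * (∑ k, y k) ^ d := mul_le_mul_of_nonneg_left ih hS
      _ = (∑ k, y k) ^ (d + 1) := by ring

lemma E_one (y : Fin M → ℝ) : E y 1 = ∑ k, y k := by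
  have h := ident y 0
  simp [E, Finset.powersetCard_zero] at h ⊢
  linarith

lemma claim (y : Fin M → ℝ) (hy : ∀ k, 0 ≤ y k) (m : ℕ) :
    (∑ k, y k) ^ (m + 1) - ((m + 1).choose 2 : ℝ) * (∑ k, (y k) ^ 2) * (∑ k, y k) ^ (m - 1)
      ≤ ((m + 1).factorial : ℝ) * E y (m + 1) := by
  induction m with
  | zero => simp [E_one]
  | succ m ih =>
    set S := ∑ k, y k with hSdef
    set Q := ∑ k, (y k) ^ 2 with hQdef
    set T := ∑ s ∈ Finset.powersetCard (m+1) (Finset.univ : Finset (Fin M)),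
        ∑ k ∈ s, y k * ∏ j ∈ s, y j with hTdef
    set C2 : ℝ := ((m + 1).choose 2 : ℝ) with hC2def
    have hS : 0 ≤ S := Finset.sum_nonneg fun k _ => hy k
    have hQ : 0 ≤ Q := Finset.sum_nonneg fun k _ => sq_nonneg _
    have hfacpos : (0:ℝ) ≤ ((m+1).factorial : ℝ) := by positivity
    have hid : S * E y (m+1) = ((m:ℝ) + 1 + 1) * E y (m + 2) + T := by
      have h := ident y (m+1); push_cast at h; exact h
    have hT : T ≤ Q * E y m := T_le y hy m
    have hfacE : ((m+1).factorial : ℝ) * E y m ≤ ((m:ℝ) + 1) * S ^ m := by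
      have h : ((m+1).factorial : ℝ) = ((m:ℝ) + 1) * m.factorial := by
        rw [Nat.factorial_succ]; push_cast; ring
      rw [h, mul_assoc]
      exact mul_le_mul_of_nonneg_left (upper y hy m) (by positivity)
    have hfac : ((m + 2).factorial : ℝ) = ((m:ℝ) + 2) * (m + 1).factorial := by
      rw [Nat.factorial_succ]; push_cast; ring
    have hchoose : ((m + 2).choose 2 : ℝ) = C2 + ((m:ℝ) + 1) := by
      rw [hC2def, Nat.choose_succ_succ (m+1) 1, Nat.choose_one_right]; push_cast; ring
    have e1 : ((m:ℝ) + 1 + 1) * E y (m + 2) = S * E y (m+1) - T := by linarith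
    have e2 : ((m+1).factorial : ℝ) * T ≤ Q * (((m+1).factorial : ℝ) * E y m) := by
      have := mul_le_mul_of_nonneg_left hT hfacpos
      linarith [this]
    have e4 : Q * (((m+1).factorial : ℝ) * E y m) ≤ Q * (((m:ℝ) + 1) * S ^ m) :=
      mul_le_mul_of_nonneg_left hfacE hQ
    have e6 : S * (S ^ (m+1) - C2 * Q * S ^ (m - 1)) ≤ S * (((m+1).factorial : ℝ) * E y (m+1)) :=
      mul_le_mul_of_nonneg_left ih hS
    have e7 : S ^ (m + 2) - C2 * Q * S ^ m ≤ S * (S ^ (m+1) - C2 * Q * S ^ (m - 1)) := by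
      cases m with
      | zero =>
        have hc : C2 = 0 := by norm_num [hC2def]
        rw [hc]; ring_nf
        exact le_rfl
      | succ n =>
        have h : n + 1 - 1 = n := rfl
        rw [h]; ring_nf
        exact le_rfl
    have e8 : ((m + 2).factorial : ℝ) * E y (m + 2)
        = ((m+1).factorial : ℝ) * (S * E y (m+1) - T) := by
      rw [hfac, ← e1]; ring
    have e9 : ((m+1).factorial : ℝ) * (S * E y (m+1) - T)
        = S * (((m+1).factorial : ℝ) * E y (m+1)) - ((m+1).factorial : ℝ) * T := by ring
    show S ^ (m + 2) - ((m + 2).choose 2 : ℝ) * Q * S ^ m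
        ≤ ((m + 2).factorial : ℝ) * E y (m + 2)
    have goalform : S ^ (m + 2) - ((m + 2).choose 2 : ℝ) * Q * S ^ m
        = S ^ (m + 2) - C2 * Q * S ^ m - ((m:ℝ) + 1) * Q * S ^ m := by
      rw [hchoose]; ring
    rw [goalform]
    nlinarith [e2, e4, e6, e7, e8, e9]

theorem esymm_lower_bound (M : ℕ) (y : Fin M → ℝ) (hy : ∀ k, 0 ≤ y k)
    (hpos : 0 < ∑ k, y k)
    (d : ℕ) (hd1 : 1 ≤ d) (hdM : d ≤ M) :
    ((∑ k, y k) ^ d / (Nat.factorial d)) *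
      (1 - (Nat.choose d 2 : ℝ) * (∑ k, (y k) ^ 2) / (∑ k, y k) ^ 2)
      ≤ ∑ s ∈ Finset.powersetCard d (Finset.univ : Finset (Fin M)), ∏ k ∈ s, y k := by
  obtain ⟨m, rfl⟩ : ∃ m, d = m + 1 := ⟨d - 1, by omega⟩
  have hE : (∑ s ∈ Finset.powersetCard (m+1) (Finset.univ : Finset (Fin M)), ∏ k ∈ s, y k)
      = E y (m + 1) := rfl
  rw [hE]
  set S := ∑ k, y k with hSdef
  set Q := ∑ k, (y k) ^ 2 with hQdef
  have key := claim y hy m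
  have hfac : (0:ℝ) < ((m+1).factorial : ℝ) := by positivity
  have hSne : S ≠ 0 := ne_of_gt hpos
  have hEq : S ^ (m+1) * (1 - ((m+1).choose 2 : ℝ) * Q / S ^ 2)
      = S ^ (m+1) - ((m+1).choose 2 : ℝ) * Q * S ^ (m - 1) := by
    cases m with
    | zero => norm_num
    | succ n =>
      have h1 : n + 1 - 1 = n := rfl
      rw [h1]
      field_simp
      ring
  rw [div_mul_eq_mul_div, div_le_iff₀ hfac, hEq]
  calc S ^ (m+1) - ((m+1).choose 2 : ℝ) * Q * S ^ (m - 1)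
      ≤ ((m+1).factorial : ℝ) * E y (m+1) := key
    _ = E y (m+1) * ((m+1).factorial : ℝ) := by ring
end

section
/- If ξ and U are real numbers with 0 < ξ ≤ U, then the tail of the exponential series satisfies Σ_{d ≥ U, d ∈ ℕ} ξ^d / d! ≤ (e·ξ/U)^U. -/
theorem exp_series_tail_bound (ξ U : ℝ) (hξ : 0 < ξ) (hU : ξ ≤ U) :
    ∑' d : ℕ, (if U ≤ (d : ℝ) then ξ ^ d / (Nat.factorial d) else 0)
      ≤ (Real.exp 1 * ξ / U) ^ U := by
  have hU0 : 0 < U := lt_of_lt_of_le hξ hU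
  set t : ℝ := U / ξ with ht
  have ht1 : 1 ≤ t := (one_le_div hξ).2 hU
  have ht0 : 0 < t := lt_of_lt_of_le one_pos ht1
  have htU : 0 < t ^ U := Real.rpow_pos_of_pos ht0 U
  have hsum : Summable (fun d : ℕ => U ^ d / (Nat.factorial d) / t ^ U) :=
    (Real.summable_pow_div_factorial U).div_const _
  have hle : ∀ d : ℕ, (if U ≤ (d : ℝ) then ξ ^ d / (Nat.factorial d) else 0)
      ≤ U ^ d / (Nat.factorial d) / t ^ U := by
    intro d
    split_ifs with h
    · have hfac : (0:ℝ) < (Nat.factorial d : ℝ) := by positivity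
      have htd : t ^ U ≤ t ^ (d : ℕ) := by
        calc t ^ U ≤ t ^ (d : ℝ) := Real.rpow_le_rpow_of_exponent_le ht1 h
        _ = t ^ (d : ℕ) := Real.rpow_natCast t d
      have hUd : U ^ d = t ^ d * ξ ^ d := by
        rw [← mul_pow, div_mul_cancel₀ _ (ne_of_gt hξ)]
      rw [hUd, div_div, div_le_div_iff₀ hfac (by positivity)]
      calc ξ ^ d * ((Nat.factorial d : ℝ) * t ^ U)
          ≤ ξ ^ d * ((Nat.factorial d : ℝ) * t ^ d) := by
            apply mul_le_mul_of_nonneg_left _ (by positivity)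
            exact mul_le_mul_of_nonneg_left htd (by positivity)
        _ = t ^ d * ξ ^ d * (Nat.factorial d : ℝ) := by ring
    · positivity
  calc ∑' d : ℕ, (if U ≤ (d : ℝ) then ξ ^ d / (Nat.factorial d) else 0)
      ≤ ∑' d : ℕ, U ^ d / (Nat.factorial d) / t ^ U := Summable.tsum_le_tsum hle (by
        apply Summable.of_nonneg_of_le (fun d => ?_) hle hsum
        split_ifs with h
        · positivity
        · exact le_refl 0) hsum
    _ = (∑' d : ℕ, U ^ d / (Nat.factorial d)) / t ^ U := tsum_div_const
    _ = Real.exp U / t ^ U := by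
        rw [Real.exp_eq_exp_ℝ, NormedSpace.exp_eq_tsum_div]
    _ = (Real.exp 1 * ξ / U) ^ U := by
        rw [← Real.exp_one_rpow U, ← Real.div_rpow (Real.exp_pos 1).le ht0.le]
        congr 1
        rw [ht]
        field_simp
end

section
/- If ξ and V are real numbers with 0 < V ≤ ξ, then the initial segment of the exponential series satisfies Σ_{0 ≤ d ≤ V, d ∈ ℕ} ξ^d / d! ≤ (e·ξ/V)^V. -/
theorem exp_series_initial_bound (ξ V : ℝ) (hV : 0 < V) (hVξ : V ≤ ξ) :
    ∑' d : ℕ, (if (d : ℝ) ≤ V then ξ ^ d / (Nat.factorial d) else 0)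
      ≤ (Real.exp 1 * ξ / V) ^ V := by
  have hξ : 0 < ξ := lt_of_lt_of_le hV hVξ
  have hr : (1:ℝ) ≤ ξ / V := (one_le_div hV).2 hVξ
  set C : ℝ := (ξ / V) ^ V with hC
  have hC0 : 0 ≤ C := Real.rpow_nonneg (by positivity) _
  have hg : Summable (fun d : ℕ => C * (V ^ d / (Nat.factorial d))) :=
    (Real.summable_pow_div_factorial V).mul_left C
  have hle : ∀ d : ℕ, (if (d : ℝ) ≤ V then ξ ^ d / (Nat.factorial d) else 0)
      ≤ C * (V ^ d / (Nat.factorial d)) := by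
    intro d
    split_ifs with h
    · have key : ξ ^ d ≤ C * V ^ d := by
        have h1 : ξ ^ d = (ξ / V) ^ d * V ^ d := by
          rw [← mul_pow, div_mul_cancel₀ _ hV.ne']
        rw [h1]
        gcongr
        calc (ξ / V) ^ d = (ξ / V) ^ (d : ℝ) := by
              rw [Real.rpow_natCast]
          _ ≤ (ξ / V) ^ V := Real.rpow_le_rpow_of_exponent_le hr h
      rw [div_le_iff₀ (by positivity : (0:ℝ) < Nat.factorial d), mul_assoc,
        div_mul_cancel₀ _ (by positivity : (Nat.factorial d : ℝ) ≠ 0)]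
      exact key
    · positivity
  have hnn : ∀ d : ℕ, 0 ≤ (if (d : ℝ) ≤ V then ξ ^ d / (Nat.factorial d) else 0) := by
    intro d; split_ifs <;> positivity
  have hf : Summable (fun d : ℕ => (if (d : ℝ) ≤ V then ξ ^ d / (Nat.factorial d) else 0)) :=
    Summable.of_nonneg_of_le hnn hle hg
  calc ∑' d : ℕ, (if (d : ℝ) ≤ V then ξ ^ d / (Nat.factorial d) else 0)
      ≤ ∑' d : ℕ, C * (V ^ d / (Nat.factorial d)) := Summable.tsum_le_tsum hle hf hg
    _ = C * ∑' d : ℕ, V ^ d / (Nat.factorial d) := tsum_mul_left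
    _ = C * Real.exp V := by
        rw [Real.exp_eq_exp_ℝ, NormedSpace.exp_eq_tsum_div]
    _ = (Real.exp 1 * ξ / V) ^ V := by
        rw [mul_div_assoc, Real.mul_rpow (Real.exp_pos 1).le (by positivity),
          Real.exp_one_rpow, mul_comm]
end

section
/- Let q ≥ 2, 0 < c < 1, c' ≥ 0, α > 0, and α_j = α (log j)^{c'}/j^c for j ≥ j₀ with 0 < α_j < 1 for all j. For N large with n = ⌊log_q N⌋, suppose λ_N is any sum of the form Σ_{i=1}^{M} α_{a_i} α_{ã_i} where M = (q^{n+1}-1)/2, the a_i are distinct elements of [0, q^{n+1}), the ã_i are distinct elements of [q^n, q^{n+1}), and {a_i} ∪ {ã_i} covers all but at most one element of [0, q^{n+1}). Then there exist positive constants D₁, D₂ depending only on c, c', q, α such that D₁ (log N)^{2c'} q^{n(1-2c)} < λ_N < D₂ (log N)^{2c'} q^{n(1-2c)} for all sufficiently large N. -/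
open Finset

private lemma rpow_neg_anti {x y c : ℝ} (hx : 0 < x) (hxy : x ≤ y) (hc : 0 ≤ c) :
    y ^ (-c) ≤ x ^ (-c) := by
  rw [Real.rpow_neg hx.le, Real.rpow_neg (hx.le.trans hxy)]
  exact inv_anti₀ (Real.rpow_pos_of_pos hx c) (Real.rpow_le_rpow hx.le hxy hc)

private lemma sum_rpow_neg_block (q : ℕ) (hq : 2 ≤ q) (c : ℝ) (hc0 : 0 < c) (hc1 : c < 1) :
    ∀ n : ℕ, ∑ x ∈ Finset.range (q ^ n), (x : ℝ) ^ (-c) ≤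
      ((q : ℝ) - 1) * ∑ k ∈ Finset.range n, ((q : ℝ) ^ (1 - c)) ^ k := by
  have hq0 : 0 < q := by omega
  have hQ0 : (0:ℝ) < (q:ℝ) := by exact_mod_cast hq0
  have hblock : ∀ k : ℕ, ∑ x ∈ Finset.Ico (q ^ k) (q ^ (k+1)), (x : ℝ) ^ (-c) ≤
      ((q:ℝ) - 1) * ((q:ℝ) ^ (1 - c)) ^ k := by
    intro k
    have hle : q ^ k ≤ q ^ (k+1) := Nat.pow_le_pow_right hq0 (by omega)
    have hqk0 : (0:ℝ) < ((q ^ k : ℕ) : ℝ) := by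
      have : 0 < q ^ k := pow_pos hq0 k
      exact_mod_cast this
    have hb : ∀ x ∈ Finset.Ico (q ^ k) (q ^ (k+1)), (x:ℝ) ^ (-c) ≤ ((q ^ k : ℕ) : ℝ) ^ (-c) := by
      intro x hx
      rw [Finset.mem_Ico] at hx
      exact rpow_neg_anti hqk0 (by exact_mod_cast hx.1) hc0.le
    calc ∑ x ∈ Finset.Ico (q ^ k) (q ^ (k+1)), (x : ℝ) ^ (-c)
        ≤ (Finset.Ico (q ^ k) (q ^ (k+1))).card • (((q ^ k : ℕ) : ℝ) ^ (-c)) :=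
          Finset.sum_le_card_nsmul _ _ _ hb
      _ = ((q ^ (k+1) - q ^ k : ℕ) : ℝ) * (((q ^ k : ℕ) : ℝ) ^ (-c)) := by
          rw [Nat.card_Ico, nsmul_eq_mul]
      _ = ((q:ℝ) - 1) * ((q:ℝ) ^ (1 - c)) ^ k := by
          rw [Nat.cast_sub hle]
          push_cast
          rw [show ((q:ℝ) ^ (k+1) - (q:ℝ) ^ k) = ((q:ℝ) - 1) * (q:ℝ) ^ k by ring, mul_assoc]
          congr 1
          simp only [← Real.rpow_natCast, ← Real.rpow_mul hQ0.le, ← Real.rpow_add hQ0]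
          congr 1
          ring
  intro n
  induction n with
  | zero =>
      simp [Real.zero_rpow (show (-c) ≠ 0 by linarith)]
  | succ n ih =>
      have hle : q ^ n ≤ q ^ (n+1) := Nat.pow_le_pow_right hq0 (by omega)
      have hsplit : ∑ x ∈ Finset.range (q ^ n), (x:ℝ) ^ (-c)
          + ∑ x ∈ Finset.Ico (q ^ n) (q ^ (n+1)), (x:ℝ) ^ (-c)
          = ∑ x ∈ Finset.range (q ^ (n+1)), (x:ℝ) ^ (-c) := by
        rw [Finset.range_eq_Ico, Finset.range_eq_Ico]
        exact Finset.sum_Ico_consecutive (fun x : ℕ => (x:ℝ) ^ (-c)) (Nat.zero_le _) hle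
      rw [← hsplit, Finset.sum_range_succ, mul_add]
      exact add_le_add ih (hblock n)

set_option maxHeartbeats 2000000 in
theorem lambda_two_sided_estimate (q : ℕ) (hq : 2 ≤ q) (c c' α : ℝ)
    (hc0 : 0 < c) (hc1 : c < 1) (hc' : 0 ≤ c') (hα : 0 < α)
    (j₀ : ℕ) (αseq : ℕ → ℝ)
    (hα01 : ∀ j, 0 < αseq j ∧ αseq j < 1)
    (hαf : ∀ j : ℕ, j₀ ≤ j → αseq j = α * (Real.log j) ^ c' / (j : ℝ) ^ c) :
    ∃ D₁ D₂ : ℝ, 0 < D₁ ∧ 0 < D₂ ∧ ∃ N₀ : ℕ, ∀ N : ℕ, N₀ ≤ N →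
      ∀ (a a2 : Fin ((q ^ (Nat.log q N + 1) - 1) / 2) → ℕ),
        Function.Injective a → Function.Injective a2 →
        (∀ i, a i < q ^ (Nat.log q N + 1)) →
        (∀ i, q ^ (Nat.log q N) ≤ a2 i ∧ a2 i < q ^ (Nat.log q N + 1)) →
        (∀ i j, a i ≠ a2 j) →
        ({m : ℕ | m < q ^ (Nat.log q N + 1)} \ (Set.range a ∪ Set.range a2)).Subsingleton →
        D₁ * (Real.log N) ^ (2 * c') * (q : ℝ) ^ ((Nat.log q N : ℝ) * (1 - 2 * c))
            < ∑ i, αseq (a i) * αseq (a2 i) ∧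
        ∑ i, αseq (a i) * αseq (a2 i)
            < D₂ * (Real.log N) ^ (2 * c') * (q : ℝ) ^ ((Nat.log q N : ℝ) * (1 - 2 * c)) := by
  have hq0 : 0 < q := by omega
  have hQ2 : (2:ℝ) ≤ (q:ℝ) := by exact_mod_cast hq
  have hQ1 : (1:ℝ) < (q:ℝ) := by linarith
  have hQ0 : (0:ℝ) < (q:ℝ) := by linarith
  set L : ℝ := Real.log q with hL_def
  have hL0 : 0 < L := Real.log_pos hQ1
  have hr1 : (1:ℝ) < (q:ℝ) ^ (1 - c) :=
    (Real.one_lt_rpow_iff_of_pos hQ0).mpr (Or.inl ⟨hQ1, by linarith⟩)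
  set r : ℝ := (q:ℝ) ^ (1 - c) with hr_def
  have hr0 : (0:ℝ) < r := by linarith
  set K : ℕ := max j₀ 2 with hK_def
  have hK2 : 2 ≤ K := le_max_right _ _
  have hKj : j₀ ≤ K := le_max_left _ _
  set C : ℝ := ((q:ℝ) - 1) * r / (r - 1) with hC_def
  have hC0 : 0 < C := div_pos (by nlinarith) (by linarith)
  have h3pow : (0:ℝ) < (3:ℝ) ^ (-(2*c')) := Real.rpow_pos_of_pos (by norm_num) _
  have hq1c : (0:ℝ) < (q:ℝ) ^ (-(1+c)) := Real.rpow_pos_of_pos hQ0 _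
  have h2c0 : (0:ℝ) < (2:ℝ) ^ c' := Real.rpow_pos_of_pos (by norm_num) _
  have h4c0 : (0:ℝ) < (4:ℝ) ^ c' := Real.rpow_pos_of_pos (by norm_num) _
  refine ⟨α^2 * (3:ℝ)^(-(2*c')) * (q:ℝ)^(-(1+c)) / 4,
          α^2 * C * (4:ℝ)^c' + (K:ℝ) * α * (2:ℝ)^c' + 1,
          div_pos (mul_pos (mul_pos (pow_pos hα 2) h3pow) hq1c) (by norm_num),
          by have h1 : 0 < α^2 * C * (4:ℝ)^c' := mul_pos (mul_pos (pow_pos hα 2) hC0) h4c0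
             have h2 : 0 ≤ (K:ℝ) * α * (2:ℝ)^c' :=
               mul_nonneg (mul_nonneg (Nat.cast_nonneg K) hα.le) h2c0.le
             linarith,
          q ^ (K + 2), ?_⟩
  intro N hN
  set n := Nat.log q N with hn_def
  intro a a2 hainj ha2inj ha_lt ha2 _hne hmiss
  have hN0 : N ≠ 0 := by
    have : 0 < q ^ (K+2) := pow_pos hq0 _
    omega
  have hnK : K + 2 ≤ n := (Nat.le_log_iff_pow_le (by omega) hN0).mpr hN
  obtain ⟨m, hnm⟩ : ∃ m, n = m + 1 := ⟨n - 1, by omega⟩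
  have hm1 : K + 1 ≤ m := by omega
  have h2m : m < 2 ^ m := Nat.lt_two_pow_self
  have hqm2m : 2 ^ m ≤ q ^ m := Nat.pow_le_pow_left hq m
  have hKqm : K ≤ q ^ m := by omega
  have hj0qm : j₀ ≤ q ^ m := le_trans hKj hKqm
  have h2qm : 2 ≤ q ^ m := le_trans hK2 hKqm
  have hqmn : q ^ m ≤ q ^ n := Nat.pow_le_pow_right hq0 (by omega)
  have hqn1 : q ^ n ≤ q ^ (n+1) := Nat.pow_le_pow_right hq0 (by omega)
  have hqnN : q ^ n ≤ N := Nat.pow_log_le_self q hN0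
  have hNqn : N < q ^ (n + 1) := Nat.lt_pow_succ_log_self (by omega) N
  have hqn0 : 0 < q ^ n := pow_pos hq0 n
  -- log N bounds
  set G : ℝ := Real.log N with hG_def
  have hGlb : (n:ℝ) * L ≤ G := by
    have h1 : Real.log ((q:ℝ) ^ n) ≤ Real.log N :=
      Real.log_le_log (by positivity) (by exact_mod_cast hqnN)
    rw [Real.log_pow] at h1
    exact h1
  have hGub : G < ((n:ℝ) + 1) * L := by
    have h1 : Real.log N < Real.log ((q:ℝ) ^ (n+1)) := by
      apply Real.log_lt_log
      · exact_mod_cast Nat.pos_of_ne_zero hN0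
      · exact_mod_cast hNqn
    rw [Real.log_pow] at h1
    push_cast at h1
    calc G = Real.log N := rfl
      _ < ((n:ℝ) + 1) * L := by linarith
  have hG1 : 1 ≤ G := by
    have hL2 : Real.log 2 ≤ L := Real.log_le_log (by norm_num) hQ2
    have hlog2 : (0.6931471803 : ℝ) < Real.log 2 := Real.log_two_gt_d9
    have hn2 : (2:ℝ) ≤ (n:ℝ) := by exact_mod_cast (by omega : 2 ≤ n)
    have h2L : 2 * L ≤ (n:ℝ) * L := mul_le_mul_of_nonneg_right hn2 hL0.le
    linarith
  have hG0 : (0:ℝ) < G := by linarith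
  set X : ℝ := ((n:ℝ) + 1) * L with hX_def
  have hX0 : 0 < X := mul_pos (by positivity) hL0
  set W : ℝ := (q:ℝ) ^ ((n:ℝ) * c) with hW_def
  have hW0 : 0 < W := Real.rpow_pos_of_pos hQ0 _
  set W2 : ℝ := (q:ℝ) ^ (((n:ℝ) + 1) * c) with hW2_def
  have hW20 : 0 < W2 := Real.rpow_pos_of_pos hQ0 _
  set Z : ℝ := (q:ℝ) ^ ((n:ℝ) * (1 - 2 * c)) with hZ_def
  have hZ0 : 0 < Z := Real.rpow_pos_of_pos hQ0 _
  have hGpow0 : (0:ℝ) < G ^ (2*c') := Real.rpow_pos_of_pos hG0 _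
  have hGZ0 : (0:ℝ) < G ^ (2*c') * Z := mul_pos hGpow0 hZ0
  -- upper and lower bounds on αseq (a2 i)
  have hA2ub : ∀ i, αseq (a2 i) ≤ α * X ^ c' / W := by
    intro i
    obtain ⟨h1, h2⟩ := ha2 i
    have hj0i : j₀ ≤ a2 i := le_trans (le_trans hj0qm hqmn) h1
    have hposai : (0:ℝ) < (a2 i : ℝ) := by
      have : 0 < a2 i := lt_of_lt_of_le hqn0 h1
      exact_mod_cast this
    have h1le : (1:ℝ) ≤ (a2 i : ℝ) := by
      have : 1 ≤ a2 i := lt_of_lt_of_le hqn0 h1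
      exact_mod_cast this
    rw [hαf _ hj0i]
    have hlogub : Real.log (a2 i) ≤ X := by
      have h3 : Real.log ((a2 i : ℕ) : ℝ) ≤ Real.log ((q:ℝ) ^ (n+1)) :=
        Real.log_le_log hposai (by exact_mod_cast h2.le)
      rw [Real.log_pow] at h3
      rw [hX_def]
      push_cast at h3 ⊢
      linarith
    have hden : W ≤ ((a2 i : ℕ) : ℝ) ^ c := by
      have h3 : (((q:ℝ) ^ n : ℝ)) ^ c ≤ ((a2 i : ℕ) : ℝ) ^ c :=
        Real.rpow_le_rpow (by positivity) (by exact_mod_cast h1) hc0.le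
      rw [← Real.rpow_natCast (q:ℝ) n, ← Real.rpow_mul hQ0.le] at h3
      rw [hW_def]
      exact h3
    refine div_le_div₀ (mul_nonneg hα.le (Real.rpow_nonneg hX0.le _)) ?_
      hW0 hden
    exact mul_le_mul_of_nonneg_left
      (Real.rpow_le_rpow (Real.log_nonneg h1le) hlogub hc') hα.le
  have hA2lb : ∀ i, α * ((n:ℝ) * L) ^ c' / W2 ≤ αseq (a2 i) := by
    intro i
    obtain ⟨h1, h2⟩ := ha2 i
    have hj0i : j₀ ≤ a2 i := le_trans (le_trans hj0qm hqmn) h1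
    have hposai : (0:ℝ) < (a2 i : ℝ) := by
      have : 0 < a2 i := lt_of_lt_of_le hqn0 h1
      exact_mod_cast this
    rw [hαf _ hj0i]
    have hnL0 : (0:ℝ) ≤ (n:ℝ) * L := mul_nonneg (Nat.cast_nonneg n) hL0.le
    have hloglb : (n:ℝ) * L ≤ Real.log (a2 i) := by
      have h3 : Real.log ((q:ℝ) ^ n) ≤ Real.log ((a2 i : ℕ) : ℝ) :=
        Real.log_le_log (by positivity) (by exact_mod_cast h1)
      rw [Real.log_pow] at h3
      exact h3
    have hden : ((a2 i : ℕ) : ℝ) ^ c ≤ W2 := by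
      have h3 : ((a2 i : ℕ) : ℝ) ^ c ≤ (((q:ℝ) ^ (n+1) : ℝ)) ^ c :=
        Real.rpow_le_rpow hposai.le (by exact_mod_cast h2.le) hc0.le
      rw [← Real.rpow_natCast (q:ℝ) (n+1), ← Real.rpow_mul hQ0.le] at h3
      rw [hW2_def]
      convert h3 using 2
      push_cast
      ring
    refine div_le_div₀ (mul_nonneg hα.le (Real.rpow_nonneg (Real.log_nonneg ?_) _)) ?_
      (Real.rpow_pos_of_pos hposai _) hden
    · have : 1 ≤ a2 i := lt_of_lt_of_le hqn0 h1
      exact_mod_cast this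
    · exact mul_le_mul_of_nonneg_left (Real.rpow_le_rpow hnL0 hloglb hc') hα.le
  have hfpos : ∀ i : Fin ((q ^ (n + 1) - 1) / 2), 0 < αseq (a i) * αseq (a2 i) :=
    fun i => mul_pos (hα01 _).1 (hα01 _).1
  constructor
  · -- LOWER BOUND
    set T : Finset ℕ := Finset.Ico (q ^ m) (q ^ n) with hT_def
    set P : Finset (Fin ((q ^ (n + 1) - 1) / 2)) :=
      Finset.univ.filter (fun i => a i ∈ T) with hP_def
    have hTmiss : (T.filter (fun x => ∀ i, a i ≠ x)).card ≤ 1 := by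
      apply Finset.card_le_one.mpr
      intro x hx y hy
      have hmem : ∀ z : ℕ, z ∈ T.filter (fun x => ∀ i, a i ≠ x) →
          z ∈ ({u : ℕ | u < q ^ (n + 1)} \ (Set.range a ∪ Set.range a2)) := by
        intro z hz
        rw [Finset.mem_filter, hT_def, Finset.mem_Ico] at hz
        obtain ⟨⟨hz1, hz2⟩, hz3⟩ := hz
        simp only [Set.mem_diff, Set.mem_setOf_eq, Set.mem_union, Set.mem_range, not_or,
          not_exists]
        refine ⟨lt_of_lt_of_le hz2 hqn1, fun i => hz3 i, fun i hi => ?_⟩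
        exact absurd hz2 (not_lt.mpr (hi ▸ (ha2 i).1))
      exact hmiss (hmem x hx) (hmem y hy)
    have hcardP : q ^ m ≤ 2 * P.card := by
      have hsplitT := Finset.card_filter_add_card_filter_not
        (s := T) (p := fun x => ∀ i, a i ≠ x)
      have hhit : T.filter (fun x => ¬ ∀ i, a i ≠ x) ⊆ P.image a := by
        intro x hx
        rw [Finset.mem_filter] at hx
        obtain ⟨hxT, hx2⟩ := hx
        push_neg at hx2
        obtain ⟨i, hi⟩ := hx2
        exact Finset.mem_image.mpr ⟨i, Finset.mem_filter.mpr ⟨Finset.mem_univ _,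
          by rw [hi]; exact hxT⟩, hi⟩
      have h2 : (T.filter (fun x => ¬ ∀ i, a i ≠ x)).card ≤ P.card :=
        le_trans (Finset.card_le_card hhit) Finset.card_image_le
      have hTcard : T.card = q ^ n - q ^ m := by rw [hT_def, Nat.card_Ico]
      have hqn2 : 2 * q ^ m ≤ q ^ n := by
        have he : q ^ n = q ^ m * q := by rw [hnm, pow_succ]
        have h3 := Nat.mul_le_mul_left (q ^ m) hq
        omega
      omega
    have hmL0 : (0:ℝ) < (m:ℝ) * L :=
      mul_pos (by exact_mod_cast (by omega : 0 < m)) hL0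
    have hnL0 : (0:ℝ) < (n:ℝ) * L :=
      mul_pos (by exact_mod_cast (by omega : 0 < n)) hL0
    set B1 : ℝ := α * ((m:ℝ) * L) ^ c' / W with hB1_def
    set B2 : ℝ := α * ((n:ℝ) * L) ^ c' / W2 with hB2_def
    have hB10 : 0 ≤ B1 :=
      div_nonneg (mul_nonneg hα.le (Real.rpow_nonneg hmL0.le _)) hW0.le
    have hB20 : 0 ≤ B2 :=
      div_nonneg (mul_nonneg hα.le (Real.rpow_nonneg hnL0.le _)) hW20.le
    have hlow : ∀ i ∈ P, B1 * B2 ≤ αseq (a i) * αseq (a2 i) := by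
      intro i hi
      rw [hP_def, Finset.mem_filter] at hi
      have hiT := hi.2
      rw [hT_def, Finset.mem_Ico] at hiT
      obtain ⟨h1, h2⟩ := hiT
      have hb1 : B1 ≤ αseq (a i) := by
        have hj : j₀ ≤ a i := le_trans hj0qm h1
        have hposai : (0:ℝ) < (a i : ℝ) := by
          have : 0 < a i := lt_of_lt_of_le (pow_pos hq0 m) h1
          exact_mod_cast this
        rw [hαf _ hj]
        have hloglb : (m:ℝ) * L ≤ Real.log (a i) := by
          have h3 : Real.log ((q:ℝ) ^ m) ≤ Real.log ((a i : ℕ) : ℝ) :=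
            Real.log_le_log (by positivity) (by exact_mod_cast h1)
          rw [Real.log_pow] at h3
          exact h3
        have hden : ((a i : ℕ) : ℝ) ^ c ≤ W := by
          have h3 : ((a i : ℕ) : ℝ) ^ c ≤ ((q:ℝ) ^ n) ^ c :=
            Real.rpow_le_rpow hposai.le (by exact_mod_cast h2.le) hc0.le
          rw [← Real.rpow_natCast (q:ℝ) n, ← Real.rpow_mul hQ0.le] at h3
          rw [hW_def]
          exact h3
        rw [hB1_def]
        refine div_le_div₀ (mul_nonneg hα.le (Real.rpow_nonneg (Real.log_nonneg ?_) _)) ?_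
          (Real.rpow_pos_of_pos hposai _) hden
        · have : 1 ≤ a i := le_trans (by omega) h1
          exact_mod_cast this
        · exact mul_le_mul_of_nonneg_left
            (Real.rpow_le_rpow hmL0.le hloglb hc') hα.le
      have hb2 : B2 ≤ αseq (a2 i) := hA2lb i
      exact mul_le_mul hb1 hb2 hB20 (hα01 _).1.le
    have hsumP : (P.card : ℝ) * (B1 * B2) ≤ ∑ i, αseq (a i) * αseq (a2 i) := by
      have h1 : P.card • (B1 * B2) ≤ ∑ i ∈ P, αseq (a i) * αseq (a2 i) :=
        Finset.card_nsmul_le_sum P _ _ hlow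
      rw [nsmul_eq_mul] at h1
      exact le_trans h1 (Finset.sum_le_sum_of_subset_of_nonneg (Finset.subset_univ P)
        (fun i _ _ => (hfpos i).le))
    have hQm : ((q ^ m : ℕ) : ℝ) * W⁻¹ * W2⁻¹ = (q:ℝ) ^ (-(1+c)) * Z := by
      have hcast : ((q ^ m : ℕ) : ℝ) = (q:ℝ) ^ (m:ℝ) := by
        push_cast
        rw [Real.rpow_natCast]
      rw [hcast, hW_def, hW2_def, hZ_def, ← Real.rpow_neg hQ0.le, ← Real.rpow_neg hQ0.le,
        ← Real.rpow_add hQ0, ← Real.rpow_add hQ0, ← Real.rpow_add hQ0]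
      congr 1
      have hmn : (m:ℝ) = (n:ℝ) - 1 := by
        have h5 : (n:ℝ) = (m:ℝ) + 1 := by exact_mod_cast congrArg (Nat.cast (R := ℝ)) hnm
        linarith
      rw [hmn]
      ring
    have hG3 : G ≤ 3 * ((m:ℝ) * L) := by
      have hm1' : (1:ℝ) ≤ (m:ℝ) := by exact_mod_cast (by omega : 1 ≤ m)
      have hne : ((n:ℝ) + 1) = (m:ℝ) + 2 := by
        have h5 : (n:ℝ) = (m:ℝ) + 1 := by exact_mod_cast congrArg (Nat.cast (R := ℝ)) hnm
        linarith
      have h1 : ((n:ℝ) + 1) * L ≤ 3 * ((m:ℝ) * L) := by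
        rw [hne]
        have h7 : (0:ℝ) ≤ (2*(m:ℝ) - 2) * L := mul_nonneg (by linarith) hL0.le
        linarith only [h7]
      exact le_trans hGub.le h1
    have hmnL : (m:ℝ) * L ≤ (n:ℝ) * L := by
      have h5 : (m:ℝ) ≤ (n:ℝ) := by exact_mod_cast (by omega : m ≤ n)
      exact mul_le_mul_of_nonneg_right h5 hL0.le
    have hprod : (3:ℝ) ^ (-(2*c')) * G ^ (2*c') ≤ ((m:ℝ)*L) ^ c' * ((n:ℝ)*L) ^ c' := by
      have h1 : G ^ (2*c') ≤ (3 * ((m:ℝ)*L)) ^ (2*c') :=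
        Real.rpow_le_rpow hG0.le hG3 (by linarith)
      have h2 : (3 * ((m:ℝ)*L)) ^ (2*c') = 3 ^ (2*c') * ((m:ℝ)*L) ^ (2*c') :=
        Real.mul_rpow (by norm_num) hmL0.le
      have h3 : ((m:ℝ)*L) ^ (2*c') = ((m:ℝ)*L) ^ c' * ((m:ℝ)*L) ^ c' := by
        rw [two_mul, Real.rpow_add hmL0]
      have h4 : ((m:ℝ)*L) ^ c' * ((m:ℝ)*L) ^ c' ≤ ((m:ℝ)*L) ^ c' * ((n:ℝ)*L) ^ c' :=
        mul_le_mul_of_nonneg_left (Real.rpow_le_rpow hmL0.le hmnL hc')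
          (Real.rpow_nonneg hmL0.le _)
      have h3inv : (3:ℝ) ^ (-(2*c')) * (3:ℝ) ^ (2*c') = 1 := by
        rw [← Real.rpow_add (by norm_num : (0:ℝ) < 3)]
        norm_num
      calc (3:ℝ)^(-(2*c')) * G^(2*c')
          ≤ (3:ℝ)^(-(2*c')) * ((3:ℝ)^(2*c') * ((m:ℝ)*L)^(2*c')) := by
            rw [← h2]
            exact mul_le_mul_of_nonneg_left h1 h3pow.le
        _ = ((m:ℝ)*L)^(2*c') := by rw [← mul_assoc, h3inv, one_mul]
        _ = ((m:ℝ)*L)^c' * ((m:ℝ)*L)^c' := h3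
        _ ≤ _ := h4
    have hBfact : ((q ^ m : ℕ) : ℝ) * (B1 * B2)
        = α^2 * (((m:ℝ)*L)^c' * ((n:ℝ)*L)^c') * (((q ^ m : ℕ) : ℝ) * W⁻¹ * W2⁻¹) := by
      rw [hB1_def, hB2_def]
      ring
    have hstep : α^2 * ((3:ℝ)^(-(2*c')) * G^(2*c')) * ((q:ℝ)^(-(1+c)) * Z)
        ≤ ((q ^ m : ℕ) : ℝ) * (B1 * B2) := by
      rw [hBfact, hQm]
      refine mul_le_mul_of_nonneg_right ?_ (mul_pos hq1c hZ0).le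
      exact mul_le_mul_of_nonneg_left hprod (by positivity)
    have hq2P : ((q ^ m : ℕ) : ℝ) ≤ 2 * (P.card : ℝ) := by exact_mod_cast hcardP
    have hBB : 0 ≤ B1 * B2 := mul_nonneg hB10 hB20
    have hchain : α^2 * ((3:ℝ)^(-(2*c')) * G^(2*c')) * ((q:ℝ)^(-(1+c)) * Z)
        ≤ 2 * ((P.card:ℝ) * (B1*B2)) := by
      have h5 : ((q ^ m : ℕ) : ℝ) * (B1*B2) ≤ 2 * (P.card:ℝ) * (B1*B2) :=
        mul_le_mul_of_nonneg_right hq2P hBB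
      linarith only [hstep, h5]
    have h5 : α^2 * ((3:ℝ)^(-(2*c')) * G^(2*c')) * ((q:ℝ)^(-(1+c)) * Z)
        ≤ 2 * ∑ i, αseq (a i) * αseq (a2 i) := by
      have h6 : 2 * ((P.card:ℝ) * (B1*B2)) ≤ 2 * ∑ i, αseq (a i) * αseq (a2 i) := by
        linarith only [hsumP]
      linarith only [hchain, h6]
    have hpos : (0:ℝ) < α^2 * ((3:ℝ)^(-(2*c')) * G^(2*c')) * ((q:ℝ)^(-(1+c)) * Z) :=
      mul_pos (mul_pos (pow_pos hα 2) (mul_pos h3pow hGpow0)) (mul_pos hq1c hZ0)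
    linarith only [h5, hpos]
  · -- UPPER BOUND
    have hbound0 : 0 ≤ α * X ^ c' / W :=
      div_nonneg (mul_nonneg hα.le (Real.rpow_nonneg hX0.le _)) hW0.le
    have hS1 : ∑ i ∈ Finset.univ.filter (fun i => a i < K), αseq (a i) * αseq (a2 i)
        ≤ (K:ℝ) * (α * X ^ c' / W) := by
      have hb : ∀ i ∈ Finset.univ.filter (fun i => a i < K),
          αseq (a i) * αseq (a2 i) ≤ α * X ^ c' / W := by
        intro i _
        calc αseq (a i) * αseq (a2 i) ≤ 1 * αseq (a2 i) :=
              mul_le_mul_of_nonneg_right (hα01 (a i)).2.le (hα01 _).1.le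
          _ = αseq (a2 i) := one_mul _
          _ ≤ _ := hA2ub i
      have h1 := Finset.sum_le_card_nsmul _ _ _ hb
      rw [nsmul_eq_mul] at h1
      refine le_trans h1 (mul_le_mul_of_nonneg_right ?_ hbound0)
      have hcard : (Finset.univ.filter (fun i => a i < K)).card ≤ K := by
        have hsub : (Finset.univ.filter (fun i => a i < K)).image a ⊆ Finset.range K := by
          intro x hx
          simp only [Finset.mem_image, Finset.mem_filter] at hx
          obtain ⟨i, ⟨_, hi⟩, rfl⟩ := hx
          exact Finset.mem_range.mpr hi
        have h2 := Finset.card_le_card hsub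
        rwa [Finset.card_image_of_injective _ hainj, Finset.card_range] at h2
      exact_mod_cast hcard
    have hsum_rpow : ∑ i, ((a i : ℝ)) ^ (-c) ≤ C * r ^ n := by
      have h1 : ∑ x ∈ Finset.univ.image a, ((x:ℕ):ℝ) ^ (-c) = ∑ i, ((a i : ℝ)) ^ (-c) :=
        Finset.sum_image (f := fun x : ℕ => (x:ℝ) ^ (-c)) (fun x _ y _ h => hainj h)
      rw [← h1]
      have h2 : Finset.univ.image a ⊆ Finset.range (q ^ (n+1)) := by
        intro x hx
        simp only [Finset.mem_image] at hx
        obtain ⟨i, _, rfl⟩ := hx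
        exact Finset.mem_range.mpr (ha_lt i)
      have h3 : ∑ x ∈ Finset.univ.image a, ((x:ℕ):ℝ)^(-c)
          ≤ ∑ x ∈ Finset.range (q^(n+1)), ((x:ℕ):ℝ)^(-c) :=
        Finset.sum_le_sum_of_subset_of_nonneg h2
          (fun x _ _ => Real.rpow_nonneg (Nat.cast_nonneg x) _)
      have h4 := sum_rpow_neg_block q hq c hc0 hc1 (n+1)
      rw [← hr_def] at h4
      have h5 : ∑ k ∈ Finset.range (n+1), r ^ k = (r ^ (n+1) - 1) / (r - 1) :=
        geom_sum_eq (by linarith) _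
      have h6 : ((q:ℝ) - 1) * ((r ^ (n+1) - 1) / (r - 1)) ≤ C * r ^ n := by
        have hps : r ^ (n+1) = r ^ n * r := pow_succ r n
        have hrn0 : (0:ℝ) < r ^ n := pow_pos hr0 n
        have key : ((q:ℝ) - 1) * (r ^ (n+1) - 1) ≤ ((q:ℝ) - 1) * r * r ^ n := by
          rw [hps]
          linarith only [hQ1]
        calc ((q:ℝ)-1) * ((r^(n+1)-1)/(r-1)) = (((q:ℝ)-1) * (r^(n+1)-1))/(r-1) := by ring
          _ ≤ (((q:ℝ)-1)*r*r^n)/(r-1) := by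
              exact (div_le_div_iff_of_pos_right (by linarith)).mpr key
          _ = C * r^n := by rw [hC_def]; ring
      calc ∑ x ∈ Finset.univ.image a, ((x:ℕ):ℝ)^(-c)
          ≤ ∑ x ∈ Finset.range (q^(n+1)), ((x:ℕ):ℝ)^(-c) := h3
        _ ≤ ((q:ℝ) - 1) * ∑ k ∈ Finset.range (n+1), r ^ k := h4
        _ = ((q:ℝ) - 1) * ((r^(n+1)-1)/(r-1)) := by rw [h5]
        _ ≤ C * r ^ n := h6
    have hE0 : 0 ≤ α^2 * X^(2*c') / W :=
      div_nonneg (mul_nonneg (by positivity) (Real.rpow_nonneg hX0.le _)) hW0.le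
    have hS2 : ∑ i ∈ Finset.univ.filter (fun i => ¬ a i < K), αseq (a i) * αseq (a2 i)
        ≤ α^2 * X^(2*c') / W * (C * r ^ n) := by
      have hb : ∀ i ∈ Finset.univ.filter (fun i => ¬ a i < K),
          αseq (a i) * αseq (a2 i) ≤ α^2 * X^(2*c') / W * ((a i : ℝ)) ^ (-c) := by
        intro i hi
        rw [Finset.mem_filter] at hi
        have hKi : K ≤ a i := le_of_not_gt hi.2
        have hai2 : 2 ≤ a i := le_trans hK2 hKi
        have hposai : (0:ℝ) < (a i : ℝ) := by exact_mod_cast (by omega : 0 < a i)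
        have haub : αseq (a i) ≤ α * X ^ c' * ((a i : ℝ)) ^ (-c) := by
          rw [hαf _ (le_trans hKj hKi)]
          have h1 : Real.log ((a i : ℕ):ℝ) ≤ Real.log ((q:ℝ)^(n+1)) :=
            Real.log_le_log hposai (by exact_mod_cast (ha_lt i).le)
          rw [Real.log_pow] at h1
          have hlogub : Real.log (a i) ≤ X := by
            rw [hX_def]
            push_cast at h1 ⊢
            linarith
          rw [Real.rpow_neg hposai.le, div_eq_mul_inv]
          exact mul_le_mul_of_nonneg_right
            (mul_le_mul_of_nonneg_left
              (Real.rpow_le_rpow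
                (Real.log_nonneg (by exact_mod_cast (by omega : 1 ≤ a i))) hlogub hc') hα.le)
            (inv_nonneg.mpr (Real.rpow_nonneg hposai.le _))
        calc αseq (a i) * αseq (a2 i)
            ≤ (α * X^c' * ((a i:ℝ))^(-c)) * (α * X^c' / W) := by
              refine mul_le_mul haub (hA2ub i) (hα01 _).1.le ?_
              exact mul_nonneg (mul_nonneg hα.le (Real.rpow_nonneg hX0.le _))
                (Real.rpow_nonneg hposai.le _)
          _ = α^2 * (X^c' * X^c') / W * ((a i:ℝ))^(-c) := by ring
          _ = α^2 * X^(2*c') / W * ((a i:ℝ))^(-c) := by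
              rw [← Real.rpow_add hX0, two_mul]
      calc ∑ i ∈ Finset.univ.filter (fun i => ¬ a i < K), αseq (a i) * αseq (a2 i)
          ≤ ∑ i ∈ Finset.univ.filter (fun i => ¬ a i < K),
              α^2*X^(2*c')/W * ((a i:ℝ))^(-c) := Finset.sum_le_sum hb
        _ = α^2*X^(2*c')/W * ∑ i ∈ Finset.univ.filter (fun i => ¬ a i < K), ((a i:ℝ))^(-c) := by
            rw [Finset.mul_sum]
        _ ≤ α^2*X^(2*c')/W * ∑ i, ((a i:ℝ))^(-c) := by
            refine mul_le_mul_of_nonneg_left ?_ hE0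
            exact Finset.sum_le_sum_of_subset_of_nonneg (Finset.filter_subset _ _)
              (fun i _ _ => Real.rpow_nonneg (Nat.cast_nonneg _) _)
        _ ≤ α^2*X^(2*c')/W * (C * r ^ n) := mul_le_mul_of_nonneg_left hsum_rpow hE0
    have hUB : ∑ i, αseq (a i) * αseq (a2 i)
        ≤ (K:ℝ)*(α*X^c'/W) + α^2*X^(2*c')/W*(C*r^n) := by
      rw [← Finset.sum_filter_add_sum_filter_not Finset.univ (fun i => a i < K)
        (fun i => αseq (a i) * αseq (a2 i))]
      exact add_le_add hS1 hS2
    have hrnW : r ^ n * W⁻¹ = Z := by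
      rw [hr_def, hW_def, hZ_def, ← Real.rpow_natCast ((q:ℝ)^(1-c)) n,
        ← Real.rpow_mul hQ0.le, ← Real.rpow_neg hQ0.le, ← Real.rpow_add hQ0]
      congr 1
      ring
    have hWinv : W⁻¹ ≤ Z := by
      have h1 : W⁻¹ = (q:ℝ) ^ (-((n:ℝ)*c)) := by rw [hW_def, ← Real.rpow_neg hQ0.le]
      have h2 : (q:ℝ) ^ (-((n:ℝ)*c)) = Z * (q:ℝ) ^ ((n:ℝ)*(c-1)) := by
        rw [hZ_def, ← Real.rpow_add hQ0]
        congr 1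
        ring
      have h3 : (q:ℝ) ^ ((n:ℝ)*(c-1)) ≤ 1 := by
        apply Real.rpow_le_one_of_one_le_of_nonpos hQ1.le
        have hn0 : (0:ℝ) ≤ (n:ℝ) * (1 - c) :=
          mul_nonneg (Nat.cast_nonneg n) (by linarith)
        linarith only [hn0]
      calc W⁻¹ = Z * (q:ℝ)^((n:ℝ)*(c-1)) := by rw [h1, h2]
        _ ≤ Z * 1 := mul_le_mul_of_nonneg_left h3 hZ0.le
        _ = Z := mul_one Z
    have hXG : X ≤ 2 * G := by
      have h1 : (1:ℝ) ≤ (n:ℝ) := by exact_mod_cast (by omega : 1 ≤ n)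
      have h2 : X ≤ 2 * ((n:ℝ) * L) := by
        rw [hX_def]
        have h7 : (0:ℝ) ≤ ((n:ℝ) - 1) * L := mul_nonneg (by linarith) hL0.le
        linarith only [h7]
      linarith only [h2, hGlb]
    have h4eq : (2:ℝ)^(2*c') = (4:ℝ)^c' := by
      have h22 : ((2:ℝ)^(2:ℕ)) ^ c' = (2:ℝ) ^ ((2:ℝ)*c') := by
        rw [← Real.rpow_natCast (2:ℝ) 2, ← Real.rpow_mul (by norm_num : (0:ℝ) ≤ 2)]
        norm_num
      rw [← h22]
      norm_num
    have hXc' : X ^ c' ≤ (2:ℝ)^c' * G^(2*c') := by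
      calc X^c' ≤ (2*G)^c' := Real.rpow_le_rpow hX0.le hXG hc'
        _ = 2^c' * G^c' := Real.mul_rpow (by norm_num) hG0.le
        _ ≤ 2^c' * G^(2*c') := mul_le_mul_of_nonneg_left
            (Real.rpow_le_rpow_of_exponent_le hG1 (by linarith)) h2c0.le
    have hX2c' : X^(2*c') ≤ (4:ℝ)^c' * G^(2*c') := by
      calc X^(2*c') ≤ (2*G)^(2*c') := Real.rpow_le_rpow hX0.le hXG (by linarith)
        _ = 2^(2*c') * G^(2*c') := Real.mul_rpow (by norm_num) hG0.le
        _ = 4^c' * G^(2*c') := by rw [h4eq]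
    have t1 : (K:ℝ)*α*X^c' * W⁻¹ ≤ (K:ℝ)*α*((2:ℝ)^c' * G^(2*c')) * Z := by
      refine mul_le_mul ?_ hWinv (inv_nonneg.mpr hW0.le) ?_
      · exact mul_le_mul_of_nonneg_left hXc' (mul_nonneg (Nat.cast_nonneg K) hα.le)
      · exact mul_nonneg (mul_nonneg (Nat.cast_nonneg K) hα.le)
          (mul_nonneg h2c0.le hGpow0.le)
    have t2 : α^2*C*X^(2*c') ≤ α^2*C*((4:ℝ)^c' * G^(2*c')) :=
      mul_le_mul_of_nonneg_left hX2c' (mul_nonneg (by positivity) hC0.le)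
    have hfinUB : (K:ℝ)*(α*X^c'/W) + α^2*X^(2*c')/W*(C*r^n)
        ≤ ((K:ℝ)*α*(2:ℝ)^c' + α^2*C*(4:ℝ)^c') * (G^(2*c') * Z) := by
      have e1 : (K:ℝ)*(α*X^c'/W) = (K:ℝ)*α*X^c' * W⁻¹ := by ring
      have e2 : α^2*X^(2*c')/W*(C*r^n) = α^2*C*X^(2*c') * (r^n * W⁻¹) := by ring
      rw [e1, e2, hrnW]
      have t2' : α^2*C*X^(2*c') * Z ≤ α^2*C*((4:ℝ)^c' * G^(2*c')) * Z :=
        mul_le_mul_of_nonneg_right t2 hZ0.le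
      calc (K:ℝ)*α*X^c' * W⁻¹ + α^2*C*X^(2*c') * Z
          ≤ (K:ℝ)*α*((2:ℝ)^c' * G^(2*c')) * Z + α^2*C*((4:ℝ)^c' * G^(2*c')) * Z :=
            add_le_add t1 t2'
        _ = ((K:ℝ)*α*(2:ℝ)^c' + α^2*C*(4:ℝ)^c') * (G^(2*c') * Z) := by ring
    have hfinal := le_trans hUB hfinUB
    linarith only [hGZ0, hfinal]
end
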